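/- Let d ≥ 1, m ≠ 0, λ ≥ 0. For every l ∈ ℕ₀ there exists a constant A ≥ 0 such that for all k > 0: sup_{p ∈ ℝ^d} ∫_{ℝ^d} |∂_k^l κ₄(p,q,−q;k)| dq ≤ A · |m|³ · k / (k^l + |m|^l). -/

import Mathlib

open MeasureTheory

set_option maxHeartbeats 1000000

/-- Coefficients of the iterated derivative of `s ↦ exp (-(B/s))`. -/
def kc : ℕ → ℕ → ℝ
  | 0, j => if j = 0 then 1 else 0
  | (l+1), j => (if j = 0 then 0 else kc l (j-1)) - ((l : ℝ) + j) * kc l j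

lemma kc_zero : ∀ {l j : ℕ}, l < j → kc l j = 0 := by
  intro l
  induction l with
  | zero => intro j h; simp [kc]; omega
  | succ l ih =>
    intro j h
    have h1 : kc l (j-1) = 0 := ih (by omega)
    have h2 : kc l j = 0 := ih (by omega)
    simp [kc, h1, h2]

lemma rep (C B : ℝ) : ∀ l : ℕ, ∀ k : ℝ, 0 < k →
    iteratedDeriv l (fun s => C * Real.exp (-(B / s))) k
      = C * (∑ j ∈ Finset.range (l+1), kc l j * B ^ j * k ^ (-(l + j : ℤ)))
          * Real.exp (-(B / k)) := by
  intro l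
  induction l with
  | zero => intro k hk; simp [kc]
  | succ l ih =>
    intro k hk
    rw [iteratedDeriv_succ]
    have hev : (iteratedDeriv l fun s => C * Real.exp (-(B / s)))
        =ᶠ[nhds k] fun s => C * (∑ j ∈ Finset.range (l+1),
            kc l j * B ^ j * s ^ (-(l + j : ℤ))) * Real.exp (-(B / s)) := by
      filter_upwards [Ioi_mem_nhds hk] with s hs using ih s hs
    rw [hev.deriv_eq]
    have hsum : HasDerivAt (fun s : ℝ => ∑ j ∈ Finset.range (l+1),
        kc l j * B ^ j * s ^ (-(l + j : ℤ)))
        (∑ j ∈ Finset.range (l+1),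
          kc l j * B ^ j * ((-((l : ℝ) + j)) * k ^ ((-(l + j : ℤ)) - 1))) k :=
      HasDerivAt.fun_sum fun j _ => by
        have := (hasDerivAt_zpow (-(l + j : ℤ)) k (Or.inl hk.ne')).const_mul (kc l j * B ^ j)
        push_cast at this
        exact this
    have h1 : HasDerivAt (fun s : ℝ => -(B / s)) (B / k ^ 2) k := by
      have := ((hasDerivAt_inv hk.ne').const_mul B).fun_neg
      simpa [div_eq_mul_inv] using this
    have hexp : HasDerivAt (fun s : ℝ => Real.exp (-(B / s)))
        (Real.exp (-(B / k)) * (B / k ^ 2)) k := h1.exp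
    have hprod := (hsum.const_mul C).fun_mul hexp
    rw [hprod.deriv]
    -- algebra
    have hk0 : k ≠ 0 := hk.ne'
    have zred : ∀ (a : ℤ) (n : ℕ), a = -(n:ℤ) → k ^ a = (k ^ n)⁻¹ := by
      intro a n ha; rw [ha, ← zpow_natCast k n, ← zpow_neg]
    have key : (∑ j ∈ Finset.range (l+1),
          kc l j * B ^ j * ((-((l : ℝ) + j)) * k ^ ((-(l + j : ℤ)) - 1)))
        + (∑ j ∈ Finset.range (l+1), kc l j * B ^ j * k ^ (-(l + j : ℤ))) * (B / k ^ 2)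
        = ∑ j ∈ Finset.range (l + 1 + 1),
            kc (l+1) j * B ^ j * k ^ (-(((l+1 : ℕ) : ℤ) + (j : ℤ))) := by
      have hsplit : ∑ j ∈ Finset.range (l + 1 + 1),
            kc (l+1) j * B ^ j * k ^ (-(((l+1 : ℕ) : ℤ) + (j : ℤ)))
          = (∑ j ∈ Finset.range (l + 1 + 1),
              (if j = 0 then (0:ℝ) else kc l (j-1)) * B ^ j * k ^ (-(((l+1 : ℕ) : ℤ) + (j : ℤ))))
            + ∑ j ∈ Finset.range (l + 1 + 1),
              (-(((l : ℝ) + j) * kc l j)) * B ^ j * k ^ (-(((l+1 : ℕ) : ℤ) + (j : ℤ))) := by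
        rw [← Finset.sum_add_distrib]
        refine Finset.sum_congr rfl fun j _ => ?_
        simp only [kc]
        ring
      rw [hsplit, Finset.sum_range_succ' _ (l+1), Finset.sum_range_succ _ (l+1),
        Finset.sum_mul]
      simp only [if_pos rfl, if_true, Nat.add_sub_cancel, zero_mul, add_zero,
        kc_zero (Nat.lt_succ_self l), mul_zero, neg_zero, Nat.succ_ne_zero, if_neg,
        if_false, eq_self_iff_true]
      rw [← Finset.sum_add_distrib, ← Finset.sum_add_distrib]
      refine Finset.sum_congr rfl fun j _ => ?_
      rw [zred _ (l+j+1) (by push_cast; ring), zred _ (l+j) (by push_cast; ring),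
        zred _ (l+j+2) (by push_cast; ring), zred _ (l+j+1) (by push_cast; ring)]
      have h2 : (k:ℝ) ^ (l+j+2) ≠ 0 := pow_ne_zero _ hk0
      have h1 : (k:ℝ) ^ (l+j+1) ≠ 0 := pow_ne_zero _ hk0
      have h0 : (k:ℝ) ^ (l+j) ≠ 0 := pow_ne_zero _ hk0
      field_simp
      ring
    rw [← key]
    ring

lemma pow_mul_exp_neg_le {x : ℝ} (hx : 0 ≤ x) (n : ℕ) :
    x ^ n * Real.exp (-x) ≤ n.factorial := by
  have h := Real.pow_div_factorial_le_exp x hx n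
  have hfac : (0:ℝ) < n.factorial := by exact_mod_cast n.factorial_pos
  have hx2 : x ^ n ≤ Real.exp x * n.factorial := by
    rw [div_le_iff₀ hfac] at h; linarith
  calc x ^ n * Real.exp (-x) ≤ (Real.exp x * n.factorial) * Real.exp (-x) :=
        mul_le_mul_of_nonneg_right hx2 (Real.exp_pos _).le
    _ = n.factorial * (Real.exp x * Real.exp (-x)) := by ring
    _ = n.factorial := by rw [← Real.exp_add, add_neg_cancel, Real.exp_zero, mul_one]

lemma repBound (C B : ℝ) (hC : 0 ≤ C) (hB : 0 ≤ B) (l : ℕ) {k : ℝ} (hk : 0 < k) :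
    |iteratedDeriv l (fun s => C * Real.exp (-(B / s))) k|
      ≤ C * (∑ j ∈ Finset.range (l+1), |kc l j| * 2 ^ j * (j.factorial : ℝ))
          * ((k ^ l)⁻¹ * Real.exp (-(B / (2 * k)))) := by
  have hk0 : k ≠ 0 := hk.ne'
  rw [rep C B l k hk, abs_mul, abs_mul, abs_of_nonneg hC, Real.abs_exp, mul_assoc, mul_assoc]
  refine mul_le_mul_of_nonneg_left ?_ hC
  have hE : Real.exp (-(B / k)) = Real.exp (-(B / (2 * k))) * Real.exp (-(B / (2 * k))) := by
    rw [← Real.exp_add]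
    congr 1
    field_simp
    ring
  calc |∑ j ∈ Finset.range (l+1), kc l j * B ^ j * k ^ (-(l + j : ℤ))| * Real.exp (-(B / k))
      ≤ (∑ j ∈ Finset.range (l+1), |kc l j * B ^ j * k ^ (-(l + j : ℤ))|) * Real.exp (-(B / k)) :=
        mul_le_mul_of_nonneg_right (Finset.abs_sum_le_sum_abs _ _) (Real.exp_pos _).le
    _ = ∑ j ∈ Finset.range (l+1), |kc l j * B ^ j * k ^ (-(l + j : ℤ))| * Real.exp (-(B / k)) :=
        Finset.sum_mul _ _ _
    _ ≤ ∑ j ∈ Finset.range (l+1), |kc l j| * 2 ^ j * (j.factorial : ℝ)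
          * ((k ^ l)⁻¹ * Real.exp (-(B / (2 * k)))) := ?_
    _ = (∑ j ∈ Finset.range (l+1), |kc l j| * 2 ^ j * (j.factorial : ℝ))
          * ((k ^ l)⁻¹ * Real.exp (-(B / (2 * k)))) := (Finset.sum_mul _ _ _).symm
  refine Finset.sum_le_sum fun j _ => ?_
  have hzp : k ^ (-(l + j : ℤ)) = (k ^ l)⁻¹ * (k ^ j)⁻¹ := by
    rw [show (-(l + j : ℤ)) = (-(l:ℤ)) + (-(j:ℤ)) by ring, zpow_add₀ hk0, zpow_neg, zpow_neg,
      zpow_natCast, zpow_natCast]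
  have habs : |kc l j * B ^ j * k ^ (-(l + j : ℤ))| = |kc l j| * B ^ j * k ^ (-(l + j : ℤ)) := by
    have h1 : (0:ℝ) ≤ k ^ (-(l + j : ℤ)) := (zpow_pos hk _).le
    rw [abs_mul, abs_mul, abs_of_nonneg (pow_nonneg hB j), abs_of_nonneg h1]
  rw [habs, hzp, hE]
  have hxkey : (B / (2 * k)) ^ j * Real.exp (-(B / (2 * k))) ≤ (j.factorial : ℝ) :=
    pow_mul_exp_neg_le (by positivity) j
  calc |kc l j| * B ^ j * ((k ^ l)⁻¹ * (k ^ j)⁻¹)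
        * (Real.exp (-(B / (2 * k))) * Real.exp (-(B / (2 * k))))
      = ((B / (2 * k)) ^ j * Real.exp (-(B / (2 * k))))
          * (|kc l j| * 2 ^ j * ((k ^ l)⁻¹ * Real.exp (-(B / (2 * k))))) := by
        rw [div_pow, mul_pow]
        field_simp
    _ ≤ (j.factorial : ℝ) * (|kc l j| * 2 ^ j * ((k ^ l)⁻¹ * Real.exp (-(B / (2 * k))))) :=
        mul_le_mul_of_nonneg_right hxkey (by positivity)
    _ = |kc l j| * 2 ^ j * (j.factorial : ℝ) * ((k ^ l)⁻¹ * Real.exp (-(B / (2 * k)))) := by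
        ring

lemma integrable_exp_neg_norm_pow (d : ℕ) (hd : 1 ≤ d) :
    Integrable (fun u : EuclideanSpace ℝ (Fin d) => Real.exp (-‖u‖ ^ (d:ℕ))) := by
  have hdp : (0:ℝ) < (d:ℝ) := by exact_mod_cast hd
  have heq : (fun u : EuclideanSpace ℝ (Fin d) => Real.exp (-‖u‖ ^ (d:ℕ)))
      = fun u : EuclideanSpace ℝ (Fin d) => Real.exp (-‖u‖ ^ ((d:ℝ))) := by
    funext u
    rw [Real.rpow_natCast]
  rw [heq]
  by_contra hcon
  have h0 : ∫ u : EuclideanSpace ℝ (Fin d), Real.exp (-‖u‖ ^ ((d:ℝ))) = 0 :=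
    integral_undef hcon
  have hball := measure_unitBall_eq_integral_div_gamma
    (volume : Measure (EuclideanSpace ℝ (Fin d))) hdp
  rw [h0] at hball
  simp only [zero_div, ENNReal.ofReal_zero] at hball
  exact (Metric.measure_ball_pos volume (0 : EuclideanSpace ℝ (Fin d)) one_pos).ne' hball

/-- The four-point function ansatz
`κ₄(p,q,r;k) = λ|m|^{4−d} exp[−(‖p‖^d + ‖q‖^d + ‖r‖^d + ‖p+q+r‖^d + |m|^d)/(k|m|^{d−1})]`. -/
noncomputable def kappa4 (d : ℕ) (m lam : ℝ) (p q r : EuclideanSpace ℝ (Fin d)) (k : ℝ) : ℝ :=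
  lam * |m| ^ ((4 : ℤ) - (d : ℤ)) *
    Real.exp (-((‖p‖ ^ d + ‖q‖ ^ d + ‖r‖ ^ d + ‖p + q + r‖ ^ d + |m| ^ d)
      / (k * |m| ^ ((d : ℤ) - 1))))

theorem stmt_11 (d : ℕ) (hd : 1 ≤ d) (m lam : ℝ) (hm : m ≠ 0) (hlam : 0 ≤ lam) (l : ℕ) :
    ∃ A : ℝ, 0 ≤ A ∧ ∀ k : ℝ, 0 < k → ∀ p : EuclideanSpace ℝ (Fin d),
      (∫ q, |iteratedDeriv l (fun s => kappa4 d m lam p q (-q) s) k|)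
        ≤ A * |m| ^ 3 * k / (k ^ l + |m| ^ l) := by
  have hmabs : (0:ℝ) < |m| := abs_pos.mpr hm
  have hm0 : |m| ≠ 0 := hmabs.ne'
  have hM : (0:ℝ) < |m| ^ ((d:ℤ) - 1) := zpow_pos hmabs _
  have hC : (0:ℝ) ≤ lam * |m| ^ ((4:ℤ) - (d:ℤ)) := mul_nonneg hlam (zpow_pos hmabs _).le
  have hD : (0:ℝ) ≤ ∑ j ∈ Finset.range (l+1), |kc l j| * 2 ^ j * (j.factorial : ℝ) :=
    Finset.sum_nonneg fun j _ => by positivity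
  have hI : (0:ℝ) ≤ ∫ u : EuclideanSpace ℝ (Fin d), Real.exp (-‖u‖ ^ (d:ℕ)) :=
    integral_nonneg fun u => (Real.exp_pos _).le
  set D : ℝ := ∑ j ∈ Finset.range (l+1), |kc l j| * 2 ^ j * (j.factorial : ℝ) with hDdef
  set I : ℝ := ∫ u : EuclideanSpace ℝ (Fin d), Real.exp (-‖u‖ ^ (d:ℕ)) with hIdef
  refine ⟨lam * D * I * (1 + 2 ^ l * (l.factorial : ℝ)), by positivity, ?_⟩
  intro k hk p
  have hk0 : k ≠ 0 := hk.ne'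
  have hkM : (0:ℝ) < k * |m| ^ ((d:ℤ) - 1) := mul_pos hk hM
  have hmd : |m| * |m| ^ ((d:ℤ) - 1) = |m| ^ (d:ℕ) := by
    calc |m| * |m| ^ ((d:ℤ) - 1) = |m| ^ (1:ℤ) * |m| ^ ((d:ℤ) - 1) := by rw [zpow_one]
      _ = |m| ^ ((1:ℤ) + ((d:ℤ) - 1)) := (zpow_add₀ hm0 _ _).symm
      _ = |m| ^ ((d:ℕ):ℤ) := by congr 1; ring
      _ = |m| ^ (d:ℕ) := zpow_natCast _ _
  -- pointwise bound
  have hpt : ∀ q : EuclideanSpace ℝ (Fin d),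
      |iteratedDeriv l (fun s => kappa4 d m lam p q (-q) s) k|
        ≤ (lam * |m| ^ ((4:ℤ) - (d:ℤ)) * D * ((k ^ l)⁻¹ * Real.exp (-(|m| / (2 * k)))))
            * Real.exp (-(‖q‖ ^ (d:ℕ) / (k * |m| ^ ((d:ℤ) - 1)))) := by
    intro q
    have hfq : (fun s => kappa4 d m lam p q (-q) s)
        = fun s => (lam * |m| ^ ((4:ℤ) - (d:ℤ))) * Real.exp
            (-(((‖p‖ ^ d + ‖q‖ ^ d + ‖-q‖ ^ d + ‖p + q + -q‖ ^ d + |m| ^ d)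
                / |m| ^ ((d:ℤ) - 1)) / s)) := by
      funext s
      simp only [kappa4]
      rw [div_div, mul_comm (|m| ^ ((d:ℤ) - 1)) s]
    rw [hfq]
    have hBq0 : (0:ℝ) ≤ (‖p‖ ^ d + ‖q‖ ^ d + ‖-q‖ ^ d + ‖p + q + -q‖ ^ d + |m| ^ d)
        / |m| ^ ((d:ℤ) - 1) := div_nonneg (by positivity) hM.le
    refine (repBound _ _ hC hBq0 l hk).trans ?_
    rw [hDdef] at *
    have hexp : Real.exp (-((‖p‖ ^ d + ‖q‖ ^ d + ‖-q‖ ^ d + ‖p + q + -q‖ ^ d + |m| ^ d)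
          / |m| ^ ((d:ℤ) - 1) / (2 * k)))
        ≤ Real.exp (-(|m| / (2 * k)))
            * Real.exp (-(‖q‖ ^ (d:ℕ) / (k * |m| ^ ((d:ℤ) - 1)))) := by
      rw [← Real.exp_add]
      apply Real.exp_le_exp.mpr
      rw [div_div]
      have hnq : ‖(-q : EuclideanSpace ℝ (Fin d))‖ = ‖q‖ := norm_neg q
      have hkey : |m| / (2 * k) + ‖q‖ ^ (d:ℕ) / (k * |m| ^ ((d:ℤ) - 1))
          ≤ (‖p‖ ^ d + ‖q‖ ^ d + ‖-q‖ ^ d + ‖p + q + -q‖ ^ d + |m| ^ d)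
              / (|m| ^ ((d:ℤ) - 1) * (2 * k)) := by
        have h1 : |m| / (2 * k) + ‖q‖ ^ (d:ℕ) / (k * |m| ^ ((d:ℤ) - 1))
            = (|m| * |m| ^ ((d:ℤ) - 1) + 2 * ‖q‖ ^ (d:ℕ))
                / (|m| ^ ((d:ℤ) - 1) * (2 * k)) := by
          field_simp
        rw [h1]
        gcongr ?_ / _
        rw [hnq]
        have h2 := pow_nonneg (norm_nonneg p) d
        have h3 := pow_nonneg (norm_nonneg (p + q + -q)) d
        linarith [hmd]
      linarith [hkey]
    calc lam * |m| ^ ((4:ℤ) - (d:ℤ)) * (∑ j ∈ Finset.range (l+1),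
            |kc l j| * 2 ^ j * (j.factorial : ℝ))
          * ((k ^ l)⁻¹ * Real.exp (-((‖p‖ ^ d + ‖q‖ ^ d + ‖-q‖ ^ d + ‖p + q + -q‖ ^ d + |m| ^ d)
              / |m| ^ ((d:ℤ) - 1) / (2 * k))))
        ≤ lam * |m| ^ ((4:ℤ) - (d:ℤ)) * (∑ j ∈ Finset.range (l+1),
            |kc l j| * 2 ^ j * (j.factorial : ℝ))
          * ((k ^ l)⁻¹ * (Real.exp (-(|m| / (2 * k)))
              * Real.exp (-(‖q‖ ^ (d:ℕ) / (k * |m| ^ ((d:ℤ) - 1)))))) := by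
          apply mul_le_mul_of_nonneg_left ?_ (by positivity)
          exact mul_le_mul_of_nonneg_left hexp (by positivity)
      _ = (lam * |m| ^ ((4:ℤ) - (d:ℤ)) * (∑ j ∈ Finset.range (l+1),
            |kc l j| * 2 ^ j * (j.factorial : ℝ)) * ((k ^ l)⁻¹ * Real.exp (-(|m| / (2 * k)))))
            * Real.exp (-(‖q‖ ^ (d:ℕ) / (k * |m| ^ ((d:ℤ) - 1)))) := by ring
  -- integral of the Gaussian-type factor
  have hdR : ((d:ℝ)) ≠ 0 := Nat.cast_ne_zero.mpr (by omega)
  have hc : (0:ℝ) < (k * |m| ^ ((d:ℤ) - 1)) ^ ((d:ℝ))⁻¹ := Real.rpow_pos_of_pos hkM _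
  have hcd : ((k * |m| ^ ((d:ℤ) - 1)) ^ ((d:ℝ))⁻¹) ^ (d:ℕ) = k * |m| ^ ((d:ℤ) - 1) := by
    rw [← Real.rpow_natCast ((k * |m| ^ ((d:ℤ) - 1)) ^ ((d:ℝ))⁻¹) d, ← Real.rpow_mul hkM.le,
      inv_mul_cancel₀ hdR, Real.rpow_one]
  set c : ℝ := (k * |m| ^ ((d:ℤ) - 1)) ^ ((d:ℝ))⁻¹ with hcdef
  have hg_int : Integrable (fun q : EuclideanSpace ℝ (Fin d) =>
      Real.exp (-(‖q‖ ^ (d:ℕ) / (k * |m| ^ ((d:ℤ) - 1))))) := by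
    have h2 := (integrable_exp_neg_norm_pow d hd).comp_smul (R := c⁻¹) (inv_ne_zero hc.ne')
    refine h2.congr (Filter.Eventually.of_forall fun q => ?_)
    show Real.exp (-‖c⁻¹ • q‖ ^ (d:ℕ))
        = Real.exp (-(‖q‖ ^ (d:ℕ) / (k * |m| ^ ((d:ℤ) - 1))))
    have hn : ‖c⁻¹ • q‖ ^ (d:ℕ) = ‖q‖ ^ (d:ℕ) / (k * |m| ^ ((d:ℤ) - 1)) := by
      rw [norm_smul, Real.norm_eq_abs, abs_of_pos (inv_pos.mpr hc), mul_pow, inv_pow, hcd,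
        inv_mul_eq_div]
    rw [hn]
  have hval : (∫ q : EuclideanSpace ℝ (Fin d),
        Real.exp (-(‖q‖ ^ (d:ℕ) / (k * |m| ^ ((d:ℤ) - 1)))))
      = (k * |m| ^ ((d:ℤ) - 1)) * I := by
    have h2 := MeasureTheory.Measure.integral_comp_smul (volume : Measure (EuclideanSpace ℝ (Fin d)))
      (fun q : EuclideanSpace ℝ (Fin d) =>
        Real.exp (-(‖q‖ ^ (d:ℕ) / (k * |m| ^ ((d:ℤ) - 1))))) c
    rw [finrank_euclideanSpace_fin] at h2
    have h4 : (∫ x : EuclideanSpace ℝ (Fin d),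
        Real.exp (-(‖c • x‖ ^ (d:ℕ) / (k * |m| ^ ((d:ℤ) - 1))))) = I := by
      rw [hIdef]
      refine integral_congr_ae (Filter.Eventually.of_forall fun x => ?_)
      show Real.exp (-(‖c • x‖ ^ (d:ℕ) / (k * |m| ^ ((d:ℤ) - 1)))) = Real.exp (-‖x‖ ^ (d:ℕ))
      have hn : ‖c • x‖ ^ (d:ℕ) = (k * |m| ^ ((d:ℤ) - 1)) * ‖x‖ ^ (d:ℕ) := by
        rw [norm_smul, Real.norm_eq_abs, abs_of_pos hc, mul_pow, hcd]
      rw [hn, mul_comm, mul_div_assoc, div_self hkM.ne', mul_one]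
    rw [h4, hcd, smul_eq_mul, abs_of_pos (inv_pos.mpr hkM)] at h2
    rw [h2]
    field_simp
  have hfac : (0:ℝ) ≤ (l.factorial : ℝ) := Nat.cast_nonneg _
  have hexp1 : Real.exp (-(|m| / (2 * k))) ≤ 1 :=
    Real.exp_le_one_iff.mpr (neg_nonpos_of_nonneg (by positivity))
  have hexp2 : Real.exp (-(|m| / (2 * k))) * |m| ^ l
      ≤ 2 ^ l * (l.factorial : ℝ) * k ^ l := by
    have hxl := pow_mul_exp_neg_le (x := |m| / (2 * k)) (by positivity) l
    have hmx : |m| ^ l = (2 * k) ^ l * (|m| / (2 * k)) ^ l := by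
      rw [← mul_pow]
      congr 1
      field_simp
    calc Real.exp (-(|m| / (2 * k))) * |m| ^ l
        = (2 * k) ^ l * ((|m| / (2 * k)) ^ l * Real.exp (-(|m| / (2 * k)))) := by
          rw [hmx]; ring
      _ ≤ (2 * k) ^ l * (l.factorial : ℝ) := mul_le_mul_of_nonneg_left hxl (by positivity)
      _ = 2 ^ l * (l.factorial : ℝ) * k ^ l := by rw [mul_pow]; ring
  have hEb : Real.exp (-(|m| / (2 * k))) * (k ^ l + |m| ^ l)
      ≤ (1 + 2 ^ l * (l.factorial : ℝ)) * k ^ l := by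
    have h1 : Real.exp (-(|m| / (2 * k))) * k ^ l ≤ k ^ l :=
      mul_le_of_le_one_left (pow_nonneg hk.le l) hexp1
    calc Real.exp (-(|m| / (2 * k))) * (k ^ l + |m| ^ l)
        = Real.exp (-(|m| / (2 * k))) * k ^ l + Real.exp (-(|m| / (2 * k))) * |m| ^ l :=
          mul_add _ _ _
      _ ≤ k ^ l + 2 ^ l * (l.factorial : ℝ) * k ^ l := add_le_add h1 hexp2
      _ = (1 + 2 ^ l * (l.factorial : ℝ)) * k ^ l := by ring
  have hCM : lam * |m| ^ ((4:ℤ) - (d:ℤ)) * |m| ^ ((d:ℤ) - 1) = lam * |m| ^ (3:ℕ) := by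
    rw [mul_assoc, ← zpow_add₀ hm0]
    congr 1
    rw [show ((4:ℤ) - (d:ℤ)) + ((d:ℤ) - 1) = ((3:ℕ):ℤ) by push_cast; ring, zpow_natCast]
  calc (∫ q, |iteratedDeriv l (fun s => kappa4 d m lam p q (-q) s) k|)
      ≤ ∫ q : EuclideanSpace ℝ (Fin d),
          (lam * |m| ^ ((4:ℤ) - (d:ℤ)) * D * ((k ^ l)⁻¹ * Real.exp (-(|m| / (2 * k)))))
            * Real.exp (-(‖q‖ ^ (d:ℕ) / (k * |m| ^ ((d:ℤ) - 1)))) :=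
        integral_mono_of_nonneg (Filter.Eventually.of_forall fun q => abs_nonneg _)
          (hg_int.const_mul _) (Filter.Eventually.of_forall hpt)
    _ = (lam * |m| ^ ((4:ℤ) - (d:ℤ)) * D * ((k ^ l)⁻¹ * Real.exp (-(|m| / (2 * k)))))
          * ((k * |m| ^ ((d:ℤ) - 1)) * I) := by rw [integral_const_mul, hval]
    _ ≤ lam * D * I * (1 + 2 ^ l * (l.factorial : ℝ)) * |m| ^ 3 * k / (k ^ l + |m| ^ l) := ?_
  rw [le_div_iff₀ (by positivity)]
  calc (lam * |m| ^ ((4:ℤ) - (d:ℤ)) * D * ((k ^ l)⁻¹ * Real.exp (-(|m| / (2 * k)))))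
        * ((k * |m| ^ ((d:ℤ) - 1)) * I) * (k ^ l + |m| ^ l)
      = (lam * |m| ^ ((4:ℤ) - (d:ℤ)) * |m| ^ ((d:ℤ) - 1)) * (D * I * k)
          * ((k ^ l)⁻¹ * (Real.exp (-(|m| / (2 * k))) * (k ^ l + |m| ^ l))) := by ring
    _ = (lam * |m| ^ (3:ℕ)) * (D * I * k)
          * ((k ^ l)⁻¹ * (Real.exp (-(|m| / (2 * k))) * (k ^ l + |m| ^ l))) := by rw [hCM]
    _ ≤ (lam * |m| ^ (3:ℕ)) * (D * I * k)
          * ((k ^ l)⁻¹ * ((1 + 2 ^ l * (l.factorial : ℝ)) * k ^ l)) := by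
        refine mul_le_mul_of_nonneg_left
          (mul_le_mul_of_nonneg_left hEb (inv_nonneg.mpr (pow_nonneg hk.le l))) ?_
        exact mul_nonneg (mul_nonneg hlam (pow_nonneg (abs_nonneg m) 3))
          (mul_nonneg (mul_nonneg hD hI) hk.le)
    _ = lam * D * I * (1 + 2 ^ l * (l.factorial : ℝ)) * |m| ^ 3 * k * ((k ^ l)⁻¹ * k ^ l) := by
        ring
    _ = lam * D * I * (1 + 2 ^ l * (l.factorial : ℝ)) * |m| ^ 3 * k := by
        rw [inv_mul_cancel₀ (pow_ne_zero l hk0), mul_one]
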